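/- (Existence of gradient ρ-Einstein solitons on Walker manifolds with exponential metric function, Case II of the paper's classification.) Let m, k, l, s, p, r ∈ ℝ with m ≠ 0, and set n = −(l·m)/2. Define φ : ℝ → ℝ by φ(x) = (k/m²)·e^{m x} + l x + s and f : ℝ³ → ℝ by f(t,x,y) = m x + (n/2)·y² + p y + r. Then the pair (f, φ) together with λ = 0 satisfies the system (E) at every point of ℝ³; i.e., the 3-dimensional Walker manifold with metric 2 dt dy + dx² + φ(x) dy² is a steady gradient ρ-Einstein soliton with potential function f. -/

import Mathlib

/-- Partial derivative in the first coordinate `t` of `f : ℝ³ → ℝ` at `(t,x,y)`. -/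
noncomputable def pdt (f : ℝ × ℝ × ℝ → ℝ) (t x y : ℝ) : ℝ :=
  deriv (fun s => f (s, x, y)) t

/-- Partial derivative in the second coordinate `x`. -/
noncomputable def pdx (f : ℝ × ℝ × ℝ → ℝ) (t x y : ℝ) : ℝ :=
  deriv (fun s => f (t, s, y)) x

/-- Partial derivative in the third coordinate `y`. -/
noncomputable def pdy (f : ℝ × ℝ × ℝ → ℝ) (t x y : ℝ) : ℝ :=
  deriv (fun s => f (t, x, s)) y

noncomputable def pdtt (f : ℝ × ℝ × ℝ → ℝ) (t x y : ℝ) : ℝ :=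
  deriv (fun s => pdt f s x y) t

noncomputable def pdtx (f : ℝ × ℝ × ℝ → ℝ) (t x y : ℝ) : ℝ :=
  deriv (fun s => pdt f t s y) x

noncomputable def pdty (f : ℝ × ℝ × ℝ → ℝ) (t x y : ℝ) : ℝ :=
  deriv (fun s => pdt f t x s) y

noncomputable def pdxx (f : ℝ × ℝ × ℝ → ℝ) (t x y : ℝ) : ℝ :=
  deriv (fun s => pdx f t s y) x

noncomputable def pdxy (f : ℝ × ℝ × ℝ → ℝ) (t x y : ℝ) : ℝ :=
  deriv (fun s => pdx f t x s) y

noncomputable def pdyy (f : ℝ × ℝ × ℝ → ℝ) (t x y : ℝ) : ℝ :=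
  deriv (fun s => pdy f t x s) y

/-- Case II of the paper's classification: the Walker manifold with metric
function `φ(x) = (k/m²)e^{mx} + lx + s` is a steady gradient ρ-Einstein
soliton with potential `f(t,x,y) = mx + (n/2)y² + py + r`, where `n = -lm/2`. -/
theorem walker_soliton_case_II
    (m k l s p r : ℝ) (hm : m ≠ 0) (n : ℝ) (hn : n = -(l * m) / 2)
    (φ : ℝ → ℝ) (hφ : φ = fun x => (k / m^2) * Real.exp (m * x) + l * x + s)
    (f : ℝ × ℝ × ℝ → ℝ)
    (hf : f = fun q => m * q.2.1 + (n/2) * q.2.2^2 + p * q.2.2 + r) :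
    ∀ t x y : ℝ,
      pdtt f t x y = 0 ∧
      pdtx f t x y = 0 ∧
      pdty f t x y = 0 ∧
      pdxx f t x y = 0 ∧
      pdxy f t x y - (1/2) * deriv φ x * pdt f t x y = 0 ∧
      -(1/2) * deriv (deriv φ) x + pdyy f t x y
          + (1/2) * deriv φ x * pdx f t x y = 0 * φ x := by
  subst hf hφ hn
  intro t x y
  have hdt : ∀ t x y : ℝ, pdt (fun q : ℝ × ℝ × ℝ =>
      m * q.2.1 + (-(l * m) / 2/2) * q.2.2^2 + p * q.2.2 + r) t x y = 0 := by
    intro t x y; simp [pdt]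
  have hdx : ∀ t x y : ℝ, pdx (fun q : ℝ × ℝ × ℝ =>
      m * q.2.1 + (-(l * m) / 2/2) * q.2.2^2 + p * q.2.2 + r) t x y = m := by
    intro t x y
    have h : HasDerivAt (fun u : ℝ => m * u + (-(l * m) / 2/2) * y^2 + p * y + r) m x := by
      simpa using ((((hasDerivAt_id x).const_mul m).add_const
        ((-(l * m) / 2/2) * y^2)).add_const (p * y)).add_const r
    simpa [pdx] using h.deriv
  have hdy : ∀ t x y : ℝ, pdy (fun q : ℝ × ℝ × ℝ =>
      m * q.2.1 + (-(l * m) / 2/2) * q.2.2^2 + p * q.2.2 + r) t x y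
      = (-(l * m) / 2) * y + p := by
    intro t x y
    have h : HasDerivAt (fun u : ℝ =>
        m * x + (-(l * m) / 2/2) * u^2 + p * u + r)
        ((-(l * m) / 2) * y + p) y := by
      have h1 := (((hasDerivAt_pow 2 y).const_mul (-(l * m) / 2/2)).const_add (m * x)).add
        ((hasDerivAt_id y).const_mul p)
      have h2 := h1.add_const r
      refine h2.congr_deriv ?_
      ring
    simpa [pdy] using h.deriv
  have hφ' : deriv (fun x => (k / m^2) * Real.exp (m * x) + l * x + s)
      = fun x => (k / m) * Real.exp (m * x) + l := by
    funext u
    have h : HasDerivAt (fun x : ℝ => (k / m^2) * Real.exp (m * x) + l * x + s)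
        ((k / m) * Real.exp (m * u) + l) u := by
      have he : HasDerivAt (fun x : ℝ => Real.exp (m * x)) (Real.exp (m * u) * m) u :=
        by simpa using ((hasDerivAt_id u).const_mul m).exp
      have h1 := ((he.const_mul (k / m^2)).add ((hasDerivAt_id u).const_mul l)).add_const s
      refine h1.congr_deriv ?_
      field_simp
    exact h.deriv
  have hφ'' : deriv (fun u : ℝ => (k / m) * Real.exp (m * u) + l)
      = fun u => k * Real.exp (m * u) := by
    funext u
    have he : HasDerivAt (fun x : ℝ => Real.exp (m * x)) (Real.exp (m * u) * m) u :=
      by simpa using ((hasDerivAt_id u).const_mul m).exp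
    have h1 := (he.const_mul (k / m)).add_const l
    have : HasDerivAt (fun x : ℝ => (k / m) * Real.exp (m * x) + l)
        (k * Real.exp (m * u)) u := by
      refine h1.congr_deriv ?_
      field_simp
    exact this.deriv
  refine ⟨?_, ?_, ?_, ?_, ?_, ?_⟩
  · simp [pdtt, hdt]
  · simp [pdtx, hdt]
  · simp [pdty, hdt]
  · simp [pdxx, hdx]
  · simp [pdxy, hdx, hdt]
  · rw [hφ', hφ'']
    have : pdyy (fun q : ℝ × ℝ × ℝ =>
        m * q.2.1 + (-(l * m) / 2/2) * q.2.2^2 + p * q.2.2 + r) t x y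
        = -(l * m) / 2 := by
      unfold pdyy
      simp only [hdy]
      have h : HasDerivAt (fun u : ℝ => (-(l * m) / 2) * u + p) (-(l * m) / 2) y := by
        simpa using ((hasDerivAt_id y).const_mul (-(l * m) / 2)).add_const p
      exact h.deriv
    rw [this, hdx]
    field_simp
    ring
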